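/- Let θ_0 ∈ ℝ^n, A > 1 and for I ⊂ {1,…,n} set G(I) = Σ_{i ∈ I^c} θ_{0,i}² + 2A² |I| log(ne/|I|). If G attains its minimum over subsets of {1,…,n} at a nonempty set Ĩ with G(Ĩ) ≤ C |Ĩ| log(ne/|Ĩ|), then with q = |Ĩ| the vector θ_0 satisfies: Σ_{i : |θ_{0,i}| < A√(2 log(n/q))} θ_{0,i}² ≤ C q log(ne/q) and #{i : |θ_{0,i}| ≥ A√(2 log(n/q))} ≥ q; in particular θ_0 satisfies the excessive-bias restriction with constant C_s = 1. -/

import Mathlib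

open MeasureTheory ProbabilityTheory Filter Set Real Asymptotics
open scoped ENNReal NNReal BigOperators

noncomputable section

/-- Standard normal density `φ`. -/
def phiN (x : ℝ) : ℝ := (Real.sqrt (2 * Real.pi))⁻¹ * Real.exp (-(x ^ 2) / 2)

/-- Horseshoe prior density with global parameter `τ`. -/
def gHS (τ θ : ℝ) : ℝ :=
  ∫ l in Set.Ioi (0 : ℝ), phiN (θ / (l * τ)) / (l * τ) * (2 / (Real.pi * (1 + l ^ 2)))

/-- Unnormalised marginal posterior density of `θᵢ` given `Yᵢ = y` (parameter `τ`). -/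
def postDens (τ y θ : ℝ) : ℝ := phiN (y - θ) * gHS τ θ

/-- Bayesian marginal density `ψ_τ(y)` of one observation. -/
def margDens (τ y : ℝ) : ℝ := ∫ θ, postDens τ y θ

/-- Marginal posterior probability `Π(θᵢ ∈ A | Yᵢ = y, τ)`. -/
def postProb (τ y : ℝ) (A : Set ℝ) : ℝ := (∫ θ in A, postDens τ y θ) / margDens τ y

/-- Marginal posterior mean `θ̂ᵢ(τ)`. -/
def postMean (τ y : ℝ) : ℝ := (∫ θ, θ * postDens τ y θ) / margDens τ y

/-- Marginal posterior variance. -/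
def postVar (τ y : ℝ) : ℝ :=
  (∫ θ, (θ - postMean τ y) ^ 2 * postDens τ y θ) / margDens τ y

/-- Marginal posterior fourth central moment. -/
def postMom4 (τ y : ℝ) : ℝ :=
  (∫ θ, (θ - postMean τ y) ^ 4 * postDens τ y θ) / margDens τ y

/-- `ζ_τ = √(2 log (1/τ))`. -/
def zet (τ : ℝ) : ℝ := Real.sqrt (2 * Real.log (1 / τ))

/-- `τ_n(p) = (p/n) √(log (n/p))`. -/
def tauOpt (n p : ℕ) : ℝ := ((p : ℝ) / (n : ℝ)) * Real.sqrt (Real.log ((n : ℝ) / (p : ℝ)))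

/-- The law `P_{θ₀}` of `Y^n`. -/
def Pdata {n : ℕ} (θ₀ : Fin n → ℝ) : Measure (Fin n → ℝ) :=
  Measure.pi fun i => gaussianReal (θ₀ i) 1

/-- The standard normal upper `α`-quantile `z_α`. -/
def zquant (α : ℝ) : ℝ := sInf {z : ℝ | ((gaussianReal 0 1) (Set.Ioi z)).toReal ≤ α}

/-- Nearly black vectors `ℓ₀[p]`. -/
def nearlyBlack (n p : ℕ) : Set (Fin n → ℝ) :=
  {θ | ({i | θ i ≠ 0} : Set (Fin n)).ncard ≤ p}

/-- Unnormalised posterior density of the full vector `θ` given `Y^n = y` and `τ`. -/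
def fullDens {n : ℕ} (τ : ℝ) (y θ : Fin n → ℝ) : ℝ := ∏ i, postDens τ (y i) (θ i)

/-- Posterior probability `Π(θ ∈ A | Y^n = y, τ)` of a set of vectors. -/
def fullPostProb {n : ℕ} (τ : ℝ) (y : Fin n → ℝ) (A : Set (Fin n → ℝ)) : ℝ :=
  (∫ θ in A, fullDens τ y θ) / ∫ θ, fullDens τ y θ

/-- Posterior mean of the full vector (coordinatewise, by conditional independence). -/
def fullPostMean {n : ℕ} (τ : ℝ) (y : Fin n → ℝ) : Fin n → ℝ := fun i => postMean τ (y i)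

/-- Euclidean distance on `ℝⁿ`. -/
def l2dist {n : ℕ} (a b : Fin n → ℝ) : ℝ := Real.sqrt (∑ i, (a i - b i) ^ 2)

/-- Marginal likelihood of `τ`. -/
def lik {n : ℕ} (τ : ℝ) (y : Fin n → ℝ) : ℝ := ∏ i, margDens τ (y i)

/-- Unnormalised hierarchical posterior weight of `τ` given the data. -/
def hierWeight {n : ℕ} (pr : ℝ → ℝ) (y : Fin n → ℝ) (τ : ℝ) : ℝ := pr τ * lik τ y

/-- Hierarchical posterior distribution of `τ`. -/
def hierTauProb {n : ℕ} (pr : ℝ → ℝ) (y : Fin n → ℝ) (A : Set ℝ) : ℝ :=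
  (∫ τ in A, hierWeight pr y τ) / ∫ τ, hierWeight pr y τ

/-- Hierarchical marginal posterior probability for coordinate `i`. -/
def hierPostProb {n : ℕ} (pr : ℝ → ℝ) (y : Fin n → ℝ) (i : Fin n) (A : Set ℝ) : ℝ :=
  (∫ τ, hierWeight pr y τ * postProb τ (y i) A) / ∫ τ, hierWeight pr y τ

/-- Hierarchical marginal posterior mean for coordinate `i`. -/
def hierPostMean {n : ℕ} (pr : ℝ → ℝ) (y : Fin n → ℝ) (i : Fin n) : ℝ :=
  (∫ τ, hierWeight pr y τ * postMean τ (y i)) / ∫ τ, hierWeight pr y τ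

/-- Hierarchical posterior probability of a set of vectors. -/
def hierFullPostProb {n : ℕ} (pr : ℝ → ℝ) (y : Fin n → ℝ) (A : Set (Fin n → ℝ)) : ℝ :=
  (∫ τ, pr τ * ∫ θ in A, fullDens τ y θ) / ∫ τ, pr τ * ∫ θ, fullDens τ y θ

/-- Hierarchical posterior mean vector. -/
def hierFullPostMean {n : ℕ} (pr : ℝ → ℝ) (y : Fin n → ℝ) : Fin n → ℝ :=
  fun i => hierPostMean pr y i

/-- The functions `I_k`. -/
def Ik (τ k y : ℝ) : ℝ :=
  ∫ z in Set.Ioc (0 : ℝ) 1, z ^ k * (τ ^ 2 + (1 - τ ^ 2) * z)⁻¹ * Real.exp (y ^ 2 * z / 2)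

/-- The function `m_τ`. -/
def mHS (τ y : ℝ) : ℝ :=
  y ^ 2 * ((Ik τ (1 / 2) y - Ik τ (3 / 2) y) / Ik τ (-(1 / 2)) y) -
    Ik τ (1 / 2) y / Ik τ (-(1 / 2)) y

/-- The excessive-bias restriction with witness `q`. -/
def EBRwith (n : ℕ) (A Cs C : ℝ) (θ : Fin n → ℝ) (q : ℕ) : Prop :=
  1 ≤ q ∧
    (∑ i, if |θ i| < A * Real.sqrt (2 * Real.log ((n : ℝ) / (q : ℝ))) then (θ i) ^ 2 else 0)
        ≤ C * (q : ℝ) * Real.log ((n : ℝ) / (q : ℝ)) ∧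
    (q : ℝ) / Cs ≤
      (({i | A * Real.sqrt (2 * Real.log ((n : ℝ) / (q : ℝ))) ≤ |θ i|} : Set (Fin n)).ncard : ℝ)

/-- The excessive-bias restriction. -/
def EBR (n : ℕ) (A Cs C : ℝ) (θ : Fin n → ℝ) : Prop := ∃ q, EBRwith n A Cs C θ q

/-- The class `Θ[p]`. -/
def ThetaClass (n p : ℕ) (A Cs C : ℝ) : Set (Fin n → ℝ) :=
  {θ | θ ∈ nearlyBlack n p ∧ EBR n A Cs C θ}

/-- Smallest witness `q` in the excessive-bias restriction. -/
def qmin (n : ℕ) (A Cs C : ℝ) (θ : Fin n → ℝ) : ℕ := sInf {q | EBRwith n A Cs C θ q}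

/-- `p̃(θ₀)`: the number of coordinates above threshold for the smallest witness `q`. -/
def ptilde (n : ℕ) (A Cs C : ℝ) (θ : Fin n → ℝ) : ℕ :=
  ({i | A * Real.sqrt (2 * Real.log ((n : ℝ) / (qmin n A Cs C θ : ℝ))) ≤ |θ i|} :
    Set (Fin n)).ncard


lemma logdiff_aux (n q : ℕ) (h1 : 1 ≤ q) (hqn : q ≤ n) :
    Real.log ((n : ℝ) / (q : ℝ)) ≤
      (q : ℝ) * Real.log ((n : ℝ) * Real.exp 1 / (q : ℝ)) -
        ((q : ℝ) - 1) * Real.log ((n : ℝ) * Real.exp 1 / ((q : ℝ) - 1)) := by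
  have hn0 : (0:ℝ) < n := by exact_mod_cast Nat.lt_of_lt_of_le h1 hqn
  have hq0 : (0:ℝ) < q := by exact_mod_cast h1
  have hlogq : Real.log ((n : ℝ) * Real.exp 1 / (q : ℝ))
      = Real.log n + 1 - Real.log q := by
    rw [Real.log_div (by positivity) (ne_of_gt hq0),
      Real.log_mul (ne_of_gt hn0) (Real.exp_ne_zero 1), Real.log_exp]
  have hlognq : Real.log ((n : ℝ) / (q : ℝ)) = Real.log n - Real.log q :=
    Real.log_div (ne_of_gt hn0) (ne_of_gt hq0)
  rcases eq_or_lt_of_le h1 with h | h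
  · -- q = 1
    rw [← h]
    push_cast
    simp [hlogq, ← h, hlognq]
    norm_num [← h] at hlogq hlognq ⊢
    rw [hlogq]; linarith
  · -- q ≥ 2
    have hq2 : (2:ℝ) ≤ q := by exact_mod_cast h
    have hq1 : (0:ℝ) < (q:ℝ) - 1 := by linarith
    have hlogq1 : Real.log ((n : ℝ) * Real.exp 1 / ((q : ℝ) - 1))
        = Real.log n + 1 - Real.log ((q:ℝ) - 1) := by
      rw [Real.log_div (by positivity) (ne_of_gt hq1),
        Real.log_mul (ne_of_gt hn0) (Real.exp_ne_zero 1), Real.log_exp]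
    have hkey : ((q:ℝ) - 1) * (Real.log q - Real.log ((q:ℝ)-1)) ≤ 1 := by
      have h1 : Real.log q - Real.log ((q:ℝ)-1) = Real.log ((q:ℝ)/((q:ℝ)-1)) :=
        (Real.log_div (by positivity) (ne_of_gt hq1)).symm
      have h2 : Real.log ((q:ℝ)/((q:ℝ)-1)) ≤ (q:ℝ)/((q:ℝ)-1) - 1 :=
        Real.log_le_sub_one_of_pos (by positivity)
      have h3 : ((q:ℝ) - 1) * ((q:ℝ)/((q:ℝ)-1) - 1) = 1 := by
        field_simp
        ring
      nlinarith [mul_le_mul_of_nonneg_left h2 (le_of_lt hq1)]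
    rw [hlognq, hlogq, hlogq1]
    nlinarith

theorem stmt_19 (n : ℕ) (θ₀ : Fin n → ℝ) (A C : ℝ) (hA : 1 < A)
    (G : Finset (Fin n) → ℝ)
    (hG : ∀ I : Finset (Fin n),
      G I = (∑ i ∈ Iᶜ, (θ₀ i) ^ 2) +
        2 * A ^ 2 * (I.card : ℝ) * Real.log ((n : ℝ) * Real.exp 1 / (I.card : ℝ)))
    (Itil : Finset (Fin n)) (hne : Itil.Nonempty)
    (hmin : ∀ I : Finset (Fin n), G Itil ≤ G I)
    (hbd : G Itil ≤ C * (Itil.card : ℝ) *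
      Real.log ((n : ℝ) * Real.exp 1 / (Itil.card : ℝ))) :
    ((∑ i, if |θ₀ i| < A * Real.sqrt (2 * Real.log ((n : ℝ) / (Itil.card : ℝ))) then (θ₀ i) ^ 2 else 0) ≤
        C * (Itil.card : ℝ) * Real.log ((n : ℝ) * Real.exp 1 / (Itil.card : ℝ))) ∧
    ((Itil.card : ℝ) ≤ (({i | A * Real.sqrt (2 * Real.log ((n : ℝ) / (Itil.card : ℝ))) ≤ |θ₀ i|} : Set (Fin n)).ncard : ℝ)) ∧
    (∃ C' > 0, EBRwith n A 1 C' θ₀ Itil.card) := by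
  set q : ℕ := Itil.card with hqdef
  have hq1 : 1 ≤ q := hne.card_pos
  have hqn : q ≤ n := by
    have := Finset.card_le_univ Itil
    simpa [hqdef] using this
  have hq0 : (0:ℝ) < q := by exact_mod_cast hq1
  have hn0 : (0:ℝ) < n := by exact_mod_cast Nat.lt_of_lt_of_le hq1 hqn
  have hlog0 : 0 ≤ Real.log ((n:ℝ) / (q:ℝ)) :=
    Real.log_nonneg ((one_le_div hq0).2 (by exact_mod_cast hqn))
  set t : ℝ := A * Real.sqrt (2 * Real.log ((n : ℝ) / (q : ℝ))) with htdef
  -- key: every coordinate in Itil is above threshold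
  have hkey : ∀ i ∈ Itil, t ≤ |θ₀ i| := by
    intro i hi
    have hmmin := hmin (Itil.erase i)
    rw [hG, hG, Finset.compl_erase, Finset.sum_insert (by simpa using hi),
      Finset.card_erase_of_mem hi] at hmmin
    have hcast : ((q - 1 : ℕ) : ℝ) = (q:ℝ) - 1 := by
      push_cast [Nat.cast_sub hq1]; ring
    rw [hcast] at hmmin
    have hld := logdiff_aux n q hq1 hqn
    have hA2 : (0:ℝ) < A ^ 2 := by positivity
    have hsq : 2 * A ^ 2 * Real.log ((n:ℝ)/(q:ℝ)) ≤ (θ₀ i) ^ 2 := by nlinarith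
    have ht2 : t ^ 2 = 2 * A ^ 2 * Real.log ((n:ℝ)/(q:ℝ)) := by
      rw [htdef, mul_pow, Real.sq_sqrt (by linarith)]; ring
    have ht0 : 0 ≤ t := by
      rw [htdef]; positivity
    calc t = Real.sqrt (t ^ 2) := (Real.sqrt_sq ht0).symm
      _ ≤ Real.sqrt ((θ₀ i) ^ 2) := Real.sqrt_le_sqrt (by rw [ht2]; exact hsq)
      _ = |θ₀ i| := Real.sqrt_sq_eq_abs _
  -- sum bound
  have hL1 : 1 ≤ Real.log ((n:ℝ) * Real.exp 1 / (q:ℝ)) := by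
    have : Real.exp 1 ≤ (n:ℝ) * Real.exp 1 / (q:ℝ) := by
      rw [le_div_iff₀ hq0]
      nlinarith [Real.exp_pos 1, (by exact_mod_cast hqn : (q:ℝ) ≤ n)]
    calc (1:ℝ) = Real.log (Real.exp 1) := (Real.log_exp 1).symm
      _ ≤ _ := Real.log_le_log (Real.exp_pos 1) this
  have hsum : (∑ i, if |θ₀ i| < t then (θ₀ i) ^ 2 else 0) ≤ ∑ i ∈ Itilᶜ, (θ₀ i) ^ 2 := by
    rw [← Finset.sum_add_sum_compl Itil]
    have h1 : (∑ i ∈ Itil, if |θ₀ i| < t then (θ₀ i) ^ 2 else 0) = 0 :=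
      Finset.sum_eq_zero fun i hi => if_neg (not_lt.2 (hkey i hi))
    have h2 : (∑ i ∈ Itilᶜ, if |θ₀ i| < t then (θ₀ i) ^ 2 else 0) ≤ ∑ i ∈ Itilᶜ, (θ₀ i) ^ 2 :=
      Finset.sum_le_sum fun i _ => by split_ifs with h; exacts [le_rfl, sq_nonneg _]
    linarith
  have hGItil := hG Itil
  have hfirst : (∑ i, if |θ₀ i| < t then (θ₀ i) ^ 2 else 0) ≤
      C * (q : ℝ) * Real.log ((n : ℝ) * Real.exp 1 / (q : ℝ)) := by
    have h4 : 0 ≤ 2 * A ^ 2 * (q:ℝ) * Real.log ((n:ℝ) * Real.exp 1 / (q:ℝ)) := by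
      have hA0 : (0:ℝ) < A := by linarith
      positivity
    calc (∑ i, if |θ₀ i| < t then (θ₀ i) ^ 2 else 0) ≤ ∑ i ∈ Itilᶜ, (θ₀ i) ^ 2 := hsum
      _ ≤ G Itil := by rw [hGItil]; linarith
      _ ≤ _ := hbd
  -- cardinality bound
  have hcard : (q : ℝ) ≤ (({i | t ≤ |θ₀ i|} : Set (Fin n)).ncard : ℝ) := by
    have hsub : (Itil : Set (Fin n)) ⊆ {i | t ≤ |θ₀ i|} := fun i hi => hkey i hi
    have := Set.ncard_le_ncard hsub (Set.toFinite _)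
    rw [Set.ncard_coe_finset] at this
    exact_mod_cast this
  refine ⟨hfirst, hcard, ?_⟩
  -- excessive-bias restriction
  have hSnn : 0 ≤ (∑ i, if |θ₀ i| < t then (θ₀ i) ^ 2 else 0) :=
    Finset.sum_nonneg fun i _ => by split_ifs <;> positivity
  rcases eq_or_lt_of_le hqn with hqe | hqlt
  · -- q = n : threshold is 0, sum is 0
    refine ⟨1, one_pos, hq1, ?_, by rw [div_one]; exact hcard⟩
    have hlogz : Real.log ((n:ℝ)/(q:ℝ)) = 0 := by
      rw [hqe]; simp [div_self (ne_of_gt hn0), hqe]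
    have htz : t = 0 := by rw [htdef, hlogz]; simp
    have : (∑ i, if |θ₀ i| < t then (θ₀ i) ^ 2 else 0) = 0 := by
      refine Finset.sum_eq_zero fun i _ => if_neg ?_
      rw [htz]; exact not_lt.2 (abs_nonneg _)
    rw [this, hlogz]
    simp
  · -- q < n : log(n/q) > 0
    have hlogpos : 0 < Real.log ((n:ℝ)/(q:ℝ)) := by
      apply Real.log_pos
      rw [lt_div_iff₀ hq0]
      have : (q:ℝ) < n := by exact_mod_cast hqlt
      linarith
    set S := (∑ i, if |θ₀ i| < t then (θ₀ i) ^ 2 else 0) with hSdef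
    set D := (q:ℝ) * Real.log ((n:ℝ)/(q:ℝ)) with hDdef
    have hD0 : 0 < D := by positivity
    refine ⟨S / D + 1, by positivity, hq1, ?_, by rw [div_one]; exact hcard⟩
    have : (S / D + 1) * (q:ℝ) * Real.log ((n:ℝ)/(q:ℝ)) = (S / D + 1) * D := by
      rw [hDdef]; ring
    rw [htdef] at hSdef
    rw [← hSdef, this]
    have : (S / D) * D = S := div_mul_cancel₀ S (ne_of_gt hD0)
    nlinarith


end
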